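/- arXiv:2109.09053 — 2 statements merged into one kernel-verified Lean document; each statement's English description precedes it below -/
import Mathlib

section
/- There exists a constant c > 0 such that for every h ∈ (0,1) there is a nonzero function f ∈ L²(ℝ²) whose Fourier transform f̂ is supported in the set h⁻¹Y = [0, h⁻¹] × [0, 1/10] and which satisfies ‖1_X f‖_{L²(ℝ²)} ≥ c ‖f‖_{L²(ℝ²)}, where X = [0, h/10] × [0,1]. In particular, there are no constants C, β > 0 such that every f ∈ L²(ℝ²) with supp f̂ ⊆ h⁻¹Y satisfies ‖1_X f‖_{L²(ℝ²)} ≤ C h^β ‖f‖_{L²(ℝ²)} for all h ∈ (0,1). -/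
open MeasureTheory FourierTransform Set
open scoped ENNReal

/-- `g` is the Fourier–Plancherel transform of `f ∈ L²(ℝ²)` (convention
`f̂(ξ) = ∫ e^{-2πix·ξ} f(x) dx`), characterized by duality against Schwartz functions. -/
def IsL2FourierTransform2 (f g : EuclideanSpace ℝ (Fin 2) → ℂ) : Prop :=
  ∀ φ : SchwartzMap (EuclideanSpace ℝ (Fin 2)) ℂ, ∫ ξ, g ξ * φ ξ = ∫ x, f x * 𝓕 (⇑φ) x

noncomputable section

namespace NoNaiveFUP

open scoped Real ENNReal RealInnerProductSpace

abbrev E2 := EuclideanSpace ℝ (Fin 2)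

/-! ### The one-dimensional kernel -/

/-- The inverse Fourier transform of the indicator of `[0,L]` (one-dimensional kernel),
evaluated at frequency `x`. -/
def Fk (L x : ℝ) : ℂ :=
  if x = 0 then (L : ℂ)
  else (Complex.exp (((2 * π * x * L : ℝ) : ℂ) * Complex.I) - 1) /
    (((2 * π * x : ℝ) : ℂ) * Complex.I)

lemma Fk_measurable (L : ℝ) : Measurable (Fk L) := by
  unfold Fk
  refine Measurable.ite (measurableSet_eq) measurable_const ?_
  fun_prop

lemma norm_exp_mul_I_sub_one (θ : ℝ) :
    ‖Complex.exp ((θ : ℂ) * Complex.I) - 1‖ = 2 * |Real.sin (θ / 2)| := by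
  rw [Complex.norm_def]
  have h1 : Complex.normSq (Complex.exp ((θ : ℂ) * Complex.I) - 1) =
      (Real.cos θ - 1) ^ 2 + Real.sin θ ^ 2 := by
    rw [Complex.normSq_apply]
    simp [Complex.sub_re, Complex.sub_im, Complex.exp_ofReal_mul_I_re,
      Complex.exp_ofReal_mul_I_im]
    ring
  have h2 : (Real.cos θ - 1) ^ 2 + Real.sin θ ^ 2 = (2 * |Real.sin (θ / 2)|) ^ 2 := by
    have h2θ : (2:ℝ) * (θ/2) = θ := by ring
    have hc := Real.cos_two_mul (θ/2)
    rw [h2θ] at hc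
    have hp := Real.sin_sq_add_cos_sq (θ/2)
    have hp2 := Real.sin_sq_add_cos_sq θ
    have habs : |Real.sin (θ/2)| ^ 2 = Real.sin (θ/2) ^ 2 := sq_abs _
    nlinarith
  rw [h1, h2, Real.sqrt_sq_eq_abs, abs_of_nonneg (by positivity)]

lemma norm_Fk_of_ne (L x : ℝ) (hx : x ≠ 0) :
    ‖Fk L x‖ = |Real.sin (π * x * L)| / (π * |x|) := by
  rw [Fk, if_neg hx, norm_div, norm_exp_mul_I_sub_one, norm_mul, Complex.norm_real,
    Complex.norm_I, mul_one, Real.norm_eq_abs, abs_mul, abs_mul]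
  have hπ : (0:ℝ) < π := Real.pi_pos
  rw [abs_of_nonneg (by norm_num : (0:ℝ) ≤ 2), abs_of_nonneg hπ.le]
  have : 2 * π * x * L / 2 = π * x * L := by ring
  rw [this]
  field_simp

lemma norm_Fk_le (L x : ℝ) (hL : 0 ≤ L) : ‖Fk L x‖ ≤ L := by
  rcases eq_or_ne x 0 with h | h
  · simp [Fk, h, abs_of_nonneg hL]
  · rw [norm_Fk_of_ne L x h]
    have hπ : (0:ℝ) < π := Real.pi_pos
    have hx : (0:ℝ) < |x| := abs_pos.2 h
    rw [div_le_iff₀ (by positivity)]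
    calc |Real.sin (π * x * L)| ≤ |π * x * L| := Real.abs_sin_le_abs
      _ = L * (π * |x|) := by rw [abs_mul, abs_mul, abs_of_nonneg hπ.le, abs_of_nonneg hL]; ring

lemma norm_Fk_le' (L x : ℝ) (hx : x ≠ 0) : ‖Fk L x‖ ≤ 1 / (π * |x|) := by
  rw [norm_Fk_of_ne L x hx]
  have hπ : (0:ℝ) < π := Real.pi_pos
  have hx0 : (0:ℝ) < |x| := abs_pos.2 hx
  have hx1 : (0:ℝ) < π * |x| := by positivity
  exact (div_le_div_iff_of_pos_right hx1).2 (Real.abs_sin_le_one _)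

lemma norm_Fk_ge (L x : ℝ) (hL : 0 < L) (hx : 0 < x) (hxL : x * L ≤ 1 / 10) :
    2 * L / π ≤ ‖Fk L x‖ := by
  have hπ : (0:ℝ) < π := Real.pi_pos
  rw [norm_Fk_of_ne L x hx.ne']
  have hu : 0 ≤ π * x * L := by positivity
  have hu' : π * x * L ≤ π / 2 := by nlinarith
  have hsin : 2 / π * (π * x * L) ≤ Real.sin (π * x * L) := Real.mul_le_sin hu hu'
  have h0 : (0:ℝ) ≤ 2 / π * (π * x * L) := by positivity
  have habs : |Real.sin (π * x * L)| = Real.sin (π * x * L) := by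
    rw [abs_of_nonneg]; linarith
  rw [habs, abs_of_pos hx, le_div_iff₀ (by positivity)]
  have hkey : 2 * L / π * (π * x) = 2 / π * (π * x * L) := by
    field_simp
  rw [hkey]
  exact hsin

lemma Fk_integral (L : ℝ) (hL : 0 ≤ L) (x : ℝ) :
    ∫ t in Icc (0:ℝ) L, Complex.exp (((2 * π * x * t : ℝ) : ℂ) * Complex.I) = Fk L x := by
  rcases eq_or_ne x 0 with h | h
  · simp only [h, Fk, if_pos rfl]
    have : ∀ t : ℝ, Complex.exp (((2 * π * (0:ℝ) * t : ℝ) : ℂ) * Complex.I) = 1 := by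
      intro t; norm_num
    rw [setIntegral_congr_fun measurableSet_Icc (fun t _ => this t)]
    simp [Real.volume_Icc, hL]
  · have hc : (((2 * π * x : ℝ) : ℂ) * Complex.I) ≠ 0 := by
      simp [Complex.ext_iff, Real.pi_ne_zero, h]
    have key : ∀ t : ℝ, Complex.exp (((2 * π * x * t : ℝ) : ℂ) * Complex.I)
        = Complex.exp ((((2 * π * x : ℝ) : ℂ) * Complex.I) * (t : ℂ)) := by
      intro t; congr 1; push_cast; ring
    rw [setIntegral_congr_fun measurableSet_Icc (fun t _ => key t),
      MeasureTheory.integral_Icc_eq_integral_Ioc,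
      ← intervalIntegral.integral_of_le hL, integral_exp_mul_complex hc]
    rw [Fk, if_neg h]
    congr 1
    · congr 1
      · congr 1; push_cast; ring
      · norm_num

/-! ### L² estimates for the kernel -/

lemma enorm_sq_eq (z : ℂ) : (‖z‖₊ : ℝ≥0∞) ^ (2:ℝ) = ENNReal.ofReal (‖z‖ ^ 2) := by
  rw [ENNReal.rpow_two, ENNReal.ofReal_pow (norm_nonneg z), ofReal_norm_eq_enorm]; rfl

/-- Upper bound for the squared L² mass of `Fk L`. -/
lemma lintegral_Fk_le (L : ℝ) (hL : 0 < L) :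
    ∫⁻ x, (‖Fk L x‖₊ : ℝ≥0∞) ^ (2:ℝ) ≤ ENNReal.ofReal (2 * L) := by
  have hπ : (0:ℝ) < π := Real.pi_pos
  set G : ℝ → ℝ := fun x => 2 * L ^ 2 * (1 + (π * L * x) ^ 2)⁻¹ with hG
  have hptwise : ∀ x, ‖Fk L x‖ ^ 2 ≤ G x := by
    intro x
    rcases le_or_gt ((π * L * x) ^ 2) 1 with h | h
    · have h1 : ‖Fk L x‖ ^ 2 ≤ L ^ 2 := by
        have := norm_Fk_le L x hL.le
        nlinarith [norm_nonneg (Fk L x)]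
      have h2 : L ^ 2 ≤ G x := by
        show L ^ 2 ≤ 2 * L ^ 2 * (1 + (π * L * x) ^ 2)⁻¹
        rw [← div_eq_mul_inv, le_div_iff₀ (by positivity)]
        nlinarith
      linarith
    · have hx : x ≠ 0 := by
        intro hx0; rw [hx0] at h; norm_num at h
      have h1 : ‖Fk L x‖ ^ 2 ≤ 1 / (π * |x|) ^ 2 := by
        have h2 := pow_le_pow_left₀ (norm_nonneg (Fk L x)) (norm_Fk_le' L x hx) 2
        have h3 : (1 / (π * |x|)) ^ 2 = 1 / (π * |x|) ^ 2 := by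
          rw [div_pow]; norm_num
        rw [h3] at h2
        exact h2
      have h4 : 1 / (π * |x|) ^ 2 ≤ G x := by
        show 1 / (π * |x|) ^ 2 ≤ 2 * L ^ 2 * (1 + (π * L * x) ^ 2)⁻¹
        have hx2 : (π * |x|) ^ 2 = π ^ 2 * x ^ 2 := by
          rw [mul_pow, sq_abs]
        have hx3 : (0:ℝ) < x ^ 2 := by positivity
        rw [hx2, ← div_eq_mul_inv, div_le_div_iff₀ (by positivity) (by positivity)]
        have hexp : (π * L * x) ^ 2 = π ^ 2 * L ^ 2 * x ^ 2 := by ring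
        nlinarith
      linarith
  have hGint : Integrable G := by
    have h1 : Integrable (fun x : ℝ => (1 + x ^ 2)⁻¹) := integrable_inv_one_add_sq
    have h2 : Integrable (fun x : ℝ => (1 + (π * L * x) ^ 2)⁻¹) := by
      have := h1.comp_mul_left' (R := π * L) (by positivity : (0:ℝ) < π * L).ne'
      simpa using this
    exact h2.const_mul _
  have hGnn : ∀ x, 0 ≤ G x := fun x => by rw [hG]; positivity
  have hGval : ∫ x, G x = 2 * L / π * π := by
    rw [hG]
    rw [MeasureTheory.integral_const_mul]
    have := MeasureTheory.Measure.integral_comp_mul_left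
      (fun y : ℝ => (1 + y ^ 2)⁻¹) (π * L)
    rw [this, integral_univ_inv_one_add_sq]
    rw [abs_of_pos (by positivity : (0:ℝ) < (π * L)⁻¹)]
    field_simp
    rw [smul_eq_mul]; field_simp
  calc ∫⁻ x, (‖Fk L x‖₊ : ℝ≥0∞) ^ (2:ℝ)
      ≤ ∫⁻ x, ENNReal.ofReal (G x) := by
        refine lintegral_mono fun x => ?_
        rw [enorm_sq_eq]
        exact ENNReal.ofReal_le_ofReal (hptwise x)
    _ = ENNReal.ofReal (∫ x, G x) :=
        (MeasureTheory.ofReal_integral_eq_lintegral_ofReal hGint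
          (Filter.Eventually.of_forall hGnn)).symm
    _ ≤ ENNReal.ofReal (2 * L) := by
        rw [hGval]
        apply ENNReal.ofReal_le_ofReal
        have : 2 * L / π * π = 2 * L := by field_simp
        rw [this]

/-- Lower bound for the squared L² mass of `Fk L` near the origin. -/
lemma lintegral_Fk_ge (L s : ℝ) (hL : 0 < L) (hs : 0 < s) (hsL : s * L ≤ 1 / 10) :
    ENNReal.ofReal (s * (2 * L / π) ^ 2) ≤ ∫⁻ x in Icc (0:ℝ) s, (‖Fk L x‖₊ : ℝ≥0∞) ^ (2:ℝ) := by
  have hπ : (0:ℝ) < π := Real.pi_pos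
  have h1 : ∫⁻ x in Ioc (0:ℝ) s, (‖Fk L x‖₊ : ℝ≥0∞) ^ (2:ℝ)
      ≤ ∫⁻ x in Icc (0:ℝ) s, (‖Fk L x‖₊ : ℝ≥0∞) ^ (2:ℝ) :=
    lintegral_mono_set Ioc_subset_Icc_self
  refine le_trans ?_ h1
  have h2 : ∀ x ∈ Ioc (0:ℝ) s, ENNReal.ofReal ((2 * L / π) ^ 2)
      ≤ (‖Fk L x‖₊ : ℝ≥0∞) ^ (2:ℝ) := by
    intro x hx
    rw [enorm_sq_eq]
    apply ENNReal.ofReal_le_ofReal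
    have hxL : x * L ≤ 1 / 10 := by
      have := hx.2
      nlinarith [hx.1]
    have := norm_Fk_ge L x hL hx.1 hxL
    nlinarith [norm_nonneg (Fk L x), (by positivity : (0:ℝ) ≤ 2 * L / π)]
  calc ENNReal.ofReal (s * (2 * L / π) ^ 2)
      = ENNReal.ofReal ((2 * L / π) ^ 2) * volume (Ioc (0:ℝ) s) := by
        rw [Real.volume_Ioc, sub_zero, ← ENNReal.ofReal_mul (by positivity)]
        ring_nf
    _ = ∫⁻ _ in Ioc (0:ℝ) s, ENNReal.ofReal ((2 * L / π) ^ 2) :=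
        (setLIntegral_const _ _).symm
    _ ≤ ∫⁻ x in Ioc (0:ℝ) s, (‖Fk L x‖₊ : ℝ≥0∞) ^ (2:ℝ) :=
        setLIntegral_mono' measurableSet_Ioc h2

/-! ### Transport between `EuclideanSpace ℝ (Fin 2)` and `ℝ × ℝ` -/

def e2 : E2 ≃ᵐ ℝ × ℝ :=
  (MeasurableEquiv.toLp 2 (Fin 2 → ℝ)).symm.trans (MeasurableEquiv.piFinTwo fun _ => ℝ)

lemma mp2 : MeasurePreserving e2 volume volume :=
  (volume_preserving_piFinTwo fun _ => ℝ).comp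
    (EuclideanSpace.volume_preserving_symm_measurableEquiv_toLp (Fin 2))

lemma e2_symm_apply_zero (z : ℝ × ℝ) : e2.symm z 0 = z.1 := rfl
lemma e2_symm_apply_one (z : ℝ × ℝ) : e2.symm z 1 = z.2 := rfl

lemma inner_e2_symm (z : ℝ × ℝ) (x : E2) :
    ⟪e2.symm z, x⟫ = z.1 * x 0 + z.2 * x 1 := by
  rw [PiLp.inner_apply]
  simp [Fin.sum_univ_two, e2_symm_apply_zero, e2_symm_apply_one, RCLike.inner_apply]
  ring

lemma meas_eval0 : Measurable fun p : E2 => p 0 :=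
  (measurable_pi_apply 0).comp (MeasurableEquiv.toLp 2 (Fin 2 → ℝ)).symm.measurable
lemma meas_eval1 : Measurable fun p : E2 => p 1 :=
  (measurable_pi_apply 1).comp (MeasurableEquiv.toLp 2 (Fin 2 → ℝ)).symm.measurable

/-- Transport of lintegrals of coordinate products. -/
lemma lintegral_coords (P Q : ℝ → ℝ≥0∞) (hP : Measurable P) (hQ : Measurable Q) :
    ∫⁻ p : E2, P (p 0) * Q (p 1) = (∫⁻ x, P x) * ∫⁻ y, Q y := by
  have hmeas : Measurable fun z : ℝ × ℝ => P z.1 * Q z.2 :=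
    (hP.comp measurable_fst).mul (hQ.comp measurable_snd)
  have h1 : ∫⁻ p : E2, P (p 0) * Q (p 1) = ∫⁻ z : ℝ × ℝ, P z.1 * Q z.2 := by
    rw [← mp2.lintegral_comp hmeas]
    rfl
  rw [h1, MeasureTheory.Measure.volume_eq_prod, lintegral_prod_mul hP.aemeasurable hQ.aemeasurable]

/-- Transport of integrals. -/
lemma integral_e2 (Φ : E2 → ℂ) : ∫ p : E2, Φ p = ∫ z : ℝ × ℝ, Φ (e2.symm z) :=
  (MeasurePreserving.integral_comp mp2.symm e2.symm.measurableEmbedding Φ).symm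

/-! ### The construction for a fixed `h` -/

def ffun (h : ℝ) : E2 → ℂ := fun p => Fk h⁻¹ (p 0) * Fk (1/10) (p 1)
def S (h : ℝ) : Set E2 := {p : E2 | p 0 ∈ Icc 0 h⁻¹ ∧ p 1 ∈ Icc 0 (1/10)}
def gfun (h : ℝ) : E2 → ℂ := (S h).indicator fun _ => (1:ℂ)
def Xset (h : ℝ) : Set E2 := {p : E2 | p 0 ∈ Icc 0 (h/10) ∧ p 1 ∈ Icc (0:ℝ) 1}

lemma ffun_measurable (h : ℝ) : Measurable (ffun h) :=
  ((Fk_measurable _).comp meas_eval0).mul ((Fk_measurable _).comp meas_eval1)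

lemma Xset_measurable (h : ℝ) : MeasurableSet (Xset h) := by
  have : Xset h = ((fun p : E2 => p 0) ⁻¹' Icc 0 (h/10)) ∩ ((fun p : E2 => p 1) ⁻¹' Icc 0 1) := rfl
  rw [this]
  exact (meas_eval0 measurableSet_Icc).inter (meas_eval1 measurableSet_Icc)

lemma S_measurable (h : ℝ) : MeasurableSet (S h) := by
  have : S h = ((fun p : E2 => p 0) ⁻¹' Icc 0 h⁻¹) ∩ ((fun p : E2 => p 1) ⁻¹' Icc 0 (1/10)) := rfl
  rw [this]
  exact (meas_eval0 measurableSet_Icc).inter (meas_eval1 measurableSet_Icc)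

lemma S_vol_ne_top (h : ℝ) : volume (S h) ≠ ∞ := by
  have hpre : S h = e2 ⁻¹' (Icc (0:ℝ) h⁻¹ ×ˢ Icc (0:ℝ) (1/10)) := rfl
  rw [hpre, mp2.measure_preimage
    ((measurableSet_Icc.prod measurableSet_Icc).nullMeasurableSet)]
  rw [MeasureTheory.Measure.volume_eq_prod, Measure.prod_prod]
  exact (ENNReal.mul_lt_top (measure_Icc_lt_top) (measure_Icc_lt_top)).ne

lemma g_integrable (h : ℝ) : Integrable (gfun h) volume := by
  rw [gfun, integrable_indicator_iff (S_measurable h)]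
  exact integrableOn_const (S_vol_ne_top h)

lemma g_memLp (h : ℝ) : MemLp (gfun h) 2 volume :=
  memLp_indicator_const 2 (S_measurable h) 1 (Or.inr (S_vol_ne_top h))

lemma gfun_e2_symm (h : ℝ) (z : ℝ × ℝ) :
    gfun h (e2.symm z) = (Icc (0:ℝ) h⁻¹ ×ˢ Icc (0:ℝ) (1/10)).indicator (fun _ => (1:ℂ)) z := by
  by_cases hz : z.1 ∈ Icc (0:ℝ) h⁻¹ ∧ z.2 ∈ Icc (0:ℝ) (1/10)
  · rw [Set.indicator_of_mem (by exact hz : z ∈ _ ×ˢ _),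
      gfun, Set.indicator_of_mem]
    exact ⟨by rw [e2_symm_apply_zero]; exact hz.1, by rw [e2_symm_apply_one]; exact hz.2⟩
  · rw [Set.indicator_of_notMem (by exact hz : ¬ z ∈ _ ×ˢ _),
      gfun, Set.indicator_of_notMem]
    intro hmem
    exact hz ⟨by rw [← e2_symm_apply_zero z]; exact hmem.1,
      by rw [← e2_symm_apply_one z]; exact hmem.2⟩

lemma inv_fourier_g (h : ℝ) (hh : 0 < h) (x : E2) : 𝓕⁻ (gfun h) x = ffun h x := by
  rw [Real.fourierInv_eq']
  simp_rw [smul_eq_mul]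
  rw [integral_e2]
  have key : ∀ z : ℝ × ℝ,
      Complex.exp ((↑(2 * π * ⟪e2.symm z, x⟫) : ℂ) * Complex.I) * gfun h (e2.symm z)
      = ((Icc (0:ℝ) h⁻¹).indicator
          (fun t => Complex.exp (((2 * π * (x 0) * t : ℝ) : ℂ) * Complex.I)) z.1) *
        ((Icc (0:ℝ) (1/10)).indicator
          (fun t => Complex.exp (((2 * π * (x 1) * t : ℝ) : ℂ) * Complex.I)) z.2) := by
    intro z
    rw [gfun_e2_symm, inner_e2_symm]
    have hexp : Complex.exp ((↑(2 * π * (z.1 * x 0 + z.2 * x 1)) : ℂ) * Complex.I)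
        = Complex.exp (((2 * π * (x 0) * z.1 : ℝ) : ℂ) * Complex.I) *
          Complex.exp (((2 * π * (x 1) * z.2 : ℝ) : ℂ) * Complex.I) := by
      rw [← Complex.exp_add]
      congr 1
      push_cast
      ring
    rw [hexp]
    by_cases h1 : z.1 ∈ Icc (0:ℝ) h⁻¹ <;> by_cases h2 : z.2 ∈ Icc (0:ℝ) (1/10)
    · rw [Set.indicator_of_mem (Set.mk_mem_prod h1 h2), Set.indicator_of_mem h1,
        Set.indicator_of_mem h2]
      ring
    · rw [Set.indicator_of_notMem (fun hc => h2 hc.2), Set.indicator_of_notMem h2]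
      ring
    · rw [Set.indicator_of_notMem (fun hc => h1 hc.1), Set.indicator_of_notMem h1]
      ring
    · rw [Set.indicator_of_notMem (fun hc => h1 hc.1), Set.indicator_of_notMem h1]
      ring
  rw [integral_congr_ae (Filter.Eventually.of_forall key)]
  rw [MeasureTheory.Measure.volume_eq_prod, integral_prod_mul]
  rw [integral_indicator measurableSet_Icc, integral_indicator measurableSet_Icc,
    Fk_integral _ (by positivity) _, Fk_integral _ (by norm_num) _]
  rfl

/-! ### Duality -/

lemma innerL_flip : (-(innerₗ E2)).flip = -(innerₗ E2) := by
  apply LinearMap.ext; intro x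
  apply LinearMap.ext; intro y
  simp only [LinearMap.flip_apply, LinearMap.neg_apply, innerₗ_apply_apply]
  rw [real_inner_comm]

lemma duality (g f : E2 → ℂ) (hg : Integrable g volume) (hfg : ∀ x, 𝓕⁻ g x = f x)
    (φ : SchwartzMap E2 ℂ) :
    ∫ ξ, g ξ * φ ξ = ∫ x, f x * 𝓕 (⇑φ) x := by
  have hΦint : Integrable (𝓕 (⇑φ)) volume := by
    rw [← SchwartzMap.fourier_coe]
    exact (𝓕 φ).integrable
  have hL : Continuous fun p : E2 × E2 => (-(innerₗ E2)) p.1 p.2 := by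
    simp only [LinearMap.neg_apply, innerₗ_apply_apply]
    exact continuous_inner.neg
  have key := VectorFourier.integral_bilin_fourierIntegral_eq_flip
    (E := ℂ) (F := ℂ) (G := ℂ) (μ := (volume : Measure E2)) (ν := (volume : Measure E2))
    (L := -(innerₗ E2)) (f := g) (g := 𝓕 (⇑φ)) (ContinuousLinearMap.mul ℂ ℂ)
    Real.continuous_fourierChar hL hg hΦint
  simp only [ContinuousLinearMap.mul_apply'] at key
  have h1 : ∀ ξ, VectorFourier.fourierIntegral 𝐞 volume (-(innerₗ E2)) g ξ = f ξ := hfg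
  have h2 : VectorFourier.fourierIntegral 𝐞 volume (-(innerₗ E2)).flip (𝓕 (⇑φ)) = ⇑φ := by
    rw [innerL_flip]
    exact φ.continuous.fourierInv_fourier_eq φ.integrable hΦint
  simp only [h1, h2] at key
  exact (key.symm : _)

/-! ### Norm estimates for the 2D function -/

lemma eLpNorm_two_eq (f : E2 → ℂ) :
    eLpNorm f 2 volume = (∫⁻ p, (‖f p‖₊ : ℝ≥0∞) ^ (2:ℝ)) ^ (1/2 : ℝ) := by
  rw [eLpNorm_eq_lintegral_rpow_enorm_toReal two_ne_zero ENNReal.ofNat_ne_top]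
  norm_num
  rfl

lemma enorm_ffun (h : ℝ) (p : E2) :
    (‖ffun h p‖₊ : ℝ≥0∞) ^ (2:ℝ)
      = (‖Fk h⁻¹ (p 0)‖₊ : ℝ≥0∞) ^ (2:ℝ) * (‖Fk (1/10) (p 1)‖₊ : ℝ≥0∞) ^ (2:ℝ) := by
  rw [ffun, nnnorm_mul, ENNReal.coe_mul, ENNReal.mul_rpow_of_nonneg _ _ (by norm_num : (0:ℝ) ≤ 2)]

lemma enorm_ffun_ind (h : ℝ) (p : E2) :
    (‖(Xset h).indicator (ffun h) p‖₊ : ℝ≥0∞) ^ (2:ℝ)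
      = ((Icc 0 (h/10)).indicator (fun x => (‖Fk h⁻¹ x‖₊ : ℝ≥0∞) ^ (2:ℝ)) (p 0)) *
        ((Icc (0:ℝ) 1).indicator (fun x => (‖Fk (1/10) x‖₊ : ℝ≥0∞) ^ (2:ℝ)) (p 1)) := by
  by_cases hp : p ∈ Xset h
  · rw [Set.indicator_of_mem hp, Set.indicator_of_mem hp.1, Set.indicator_of_mem hp.2,
      enorm_ffun]
  · rw [Set.indicator_of_notMem hp]
    have : ¬ (p 0 ∈ Icc 0 (h/10)) ∨ ¬ (p 1 ∈ Icc (0:ℝ) 1) := by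
      by_contra hcon
      push_neg at hcon
      exact hp ⟨hcon.1, hcon.2⟩
    rcases this with h0 | h0
    · rw [Set.indicator_of_notMem h0]
      simp [ENNReal.zero_rpow_of_pos]
    · rw [Set.indicator_of_notMem h0]
      simp [ENNReal.zero_rpow_of_pos]

lemma Lf_le (h : ℝ) (hh : 0 < h) :
    ∫⁻ p, (‖ffun h p‖₊ : ℝ≥0∞) ^ (2:ℝ) ≤ ENNReal.ofReal (2 / (5 * h)) := by
  have hmeas : ∀ L : ℝ, Measurable fun x => (‖Fk L x‖₊ : ℝ≥0∞) ^ (2:ℝ) := fun L =>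
    ((Fk_measurable L).nnnorm.coe_nnreal_ennreal).pow_const _
  calc ∫⁻ p, (‖ffun h p‖₊ : ℝ≥0∞) ^ (2:ℝ)
      = (∫⁻ x, (‖Fk h⁻¹ x‖₊ : ℝ≥0∞) ^ (2:ℝ)) * ∫⁻ y, (‖Fk (1/10) y‖₊ : ℝ≥0∞) ^ (2:ℝ) := by
        simp_rw [enorm_ffun]
        exact lintegral_coords _ _ (hmeas _) (hmeas _)
    _ ≤ ENNReal.ofReal (2 * h⁻¹) * ENNReal.ofReal (2 * (1/10)) :=
        mul_le_mul' (lintegral_Fk_le _ (by positivity)) (lintegral_Fk_le _ (by norm_num))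
    _ = ENNReal.ofReal (2 / (5 * h)) := by
        rw [← ENNReal.ofReal_mul (by positivity)]
        congr 1
        field_simp
        ring

lemma LX_ge (h : ℝ) (hh : 0 < h) :
    ENNReal.ofReal (2 / (125 * π ^ 4 * h))
      ≤ ∫⁻ p, (‖(Xset h).indicator (ffun h) p‖₊ : ℝ≥0∞) ^ (2:ℝ) := by
  have hπ : (0:ℝ) < π := Real.pi_pos
  have hmeas : ∀ L : ℝ, Measurable fun x => (‖Fk L x‖₊ : ℝ≥0∞) ^ (2:ℝ) := fun L =>
    ((Fk_measurable L).nnnorm.coe_nnreal_ennreal).pow_const _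
  have hfact : ∫⁻ p, (‖(Xset h).indicator (ffun h) p‖₊ : ℝ≥0∞) ^ (2:ℝ)
      = (∫⁻ x in Icc 0 (h/10), (‖Fk h⁻¹ x‖₊ : ℝ≥0∞) ^ (2:ℝ)) *
        ∫⁻ y in Icc (0:ℝ) 1, (‖Fk (1/10) y‖₊ : ℝ≥0∞) ^ (2:ℝ) := by
    simp_rw [enorm_ffun_ind]
    rw [lintegral_coords _ _ ((hmeas _).indicator measurableSet_Icc)
      ((hmeas _).indicator measurableSet_Icc),
      lintegral_indicator measurableSet_Icc, lintegral_indicator measurableSet_Icc]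
  rw [hfact]
  have h1 := lintegral_Fk_ge h⁻¹ (h/10) (by positivity) (by positivity)
    (by rw [div_mul_eq_mul_div, mul_inv_cancel₀ hh.ne'])
  have h2 := lintegral_Fk_ge (1/10) 1 (by norm_num) one_pos (by norm_num)
  calc ENNReal.ofReal (2 / (125 * π ^ 4 * h))
      = ENNReal.ofReal ((h/10 * (2 * h⁻¹ / π) ^ 2) * (1 * (2 * (1/10) / π) ^ 2)) := by
        congr 1
        field_simp
        ring
    _ = ENNReal.ofReal (h/10 * (2 * h⁻¹ / π) ^ 2) *
        ENNReal.ofReal (1 * (2 * (1/10) / π) ^ 2) := ENNReal.ofReal_mul (by positivity)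
    _ ≤ _ := mul_le_mul' h1 h2

lemma f_memLp (h : ℝ) (hh : 0 < h) : MemLp (ffun h) 2 volume := by
  refine ⟨(ffun_measurable h).aestronglyMeasurable, ?_⟩
  rw [eLpNorm_two_eq]
  calc (∫⁻ p, (‖ffun h p‖₊ : ℝ≥0∞) ^ (2:ℝ)) ^ (1/2:ℝ)
      ≤ (ENNReal.ofReal (2 / (5 * h))) ^ (1/2:ℝ) :=
        ENNReal.rpow_le_rpow (Lf_le h hh) (by norm_num)
    _ < ∞ := ENNReal.rpow_lt_top_of_nonneg (by norm_num) ENNReal.ofReal_ne_top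

/-! ### The master lemma -/

/-- Master lemma: the per-`h` construction, with `c = 1/50`. -/
lemma master (h : ℝ) (hh : h ∈ Set.Ioo (0:ℝ) 1) :
    ∃ f g : E2 → ℂ,
      MemLp f 2 volume ∧ ¬ (f =ᵐ[volume] 0) ∧
      MemLp g 2 volume ∧ IsL2FourierTransform2 f g ∧
      Function.support g ⊆ {p : E2 | p 0 ∈ Icc 0 h⁻¹ ∧ p 1 ∈ Icc 0 (1/10)} ∧
      ENNReal.ofReal (1/50) * eLpNorm f 2 volume ≤
        eLpNorm (({p : E2 | p 0 ∈ Icc 0 (h/10) ∧ p 1 ∈ Icc (0:ℝ) 1}).indicator f) 2 volume := by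
  obtain ⟨hh0, hh1⟩ := hh
  have hπ : (0:ℝ) < π := Real.pi_pos
  refine ⟨ffun h, gfun h, f_memLp h hh0, ?_, g_memLp h, ?_, ?_, ?_⟩
  · -- nonzero
    intro hf0
    have hind : (Xset h).indicator (ffun h) =ᵐ[volume] 0 := by
      filter_upwards [hf0] with p hp
      simp [Set.indicator_apply, hp]
    have h0 : ∫⁻ p, (‖(Xset h).indicator (ffun h) p‖₊ : ℝ≥0∞) ^ (2:ℝ) = 0 := by
      have hae : ∀ᵐ p ∂(volume : Measure E2),
          (‖(Xset h).indicator (ffun h) p‖₊ : ℝ≥0∞) ^ (2:ℝ) = 0 := by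
        filter_upwards [hind] with p hp
        have hp0 : (Xset h).indicator (ffun h) p = 0 := hp
        rw [hp0, nnnorm_zero, ENNReal.coe_zero, ENNReal.zero_rpow_of_pos (by norm_num)]
      rw [lintegral_congr_ae hae, lintegral_zero]
    have hge := LX_ge h hh0
    rw [h0] at hge
    have : (0:ℝ) < 2 / (125 * π ^ 4 * h) := by positivity
    simp only [nonpos_iff_eq_zero, ENNReal.ofReal_eq_zero] at hge
    linarith
  · -- Fourier transform property
    intro φ
    exact duality (gfun h) (ffun h) (g_integrable h) (inv_fourier_g h hh0) φ
  · -- support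
    exact Set.support_indicator_subset
  · -- norm inequality
    have hLf := Lf_le h hh0
    have hLX := LX_ge h hh0
    have hsq : ENNReal.ofReal ((1/50 : ℝ)^2) * ∫⁻ p, (‖ffun h p‖₊ : ℝ≥0∞) ^ (2:ℝ)
        ≤ ∫⁻ p, (‖(Xset h).indicator (ffun h) p‖₊ : ℝ≥0∞) ^ (2:ℝ) := by
      calc ENNReal.ofReal ((1/50 : ℝ)^2) * ∫⁻ p, (‖ffun h p‖₊ : ℝ≥0∞) ^ (2:ℝ)
          ≤ ENNReal.ofReal ((1/50 : ℝ)^2) * ENNReal.ofReal (2 / (5 * h)) :=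
            mul_le_mul_right hLf _
        _ = ENNReal.ofReal ((1/50 : ℝ)^2 * (2 / (5 * h))) :=
            (ENNReal.ofReal_mul (by positivity)).symm
        _ ≤ ENNReal.ofReal (2 / (125 * π ^ 4 * h)) := by
            apply ENNReal.ofReal_le_ofReal
            have hL : (1/50:ℝ)^2 * (2/(5*h)) = 2/(12500*h) := by
              field_simp
              ring
            rw [hL]
            have hπ4 : π ^ 4 ≤ 100 := by
              have h315 : π < 3.15 := Real.pi_lt_d2
              have hsq : π ^ 2 ≤ 10 := by nlinarith [Real.pi_pos]
              calc π ^ 4 = (π ^ 2) ^ 2 := by ring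
                _ ≤ 10 ^ 2 := by nlinarith [sq_nonneg π]
                _ = 100 := by norm_num
            apply div_le_div_of_nonneg_left (by norm_num) (by positivity) (by nlinarith)
        _ ≤ _ := hLX
    rw [eLpNorm_two_eq, eLpNorm_two_eq]
    calc ENNReal.ofReal (1/50) * (∫⁻ p, (‖ffun h p‖₊ : ℝ≥0∞) ^ (2:ℝ)) ^ (1/2:ℝ)
        = (ENNReal.ofReal ((1/50:ℝ)^2)) ^ (1/2:ℝ) *
            (∫⁻ p, (‖ffun h p‖₊ : ℝ≥0∞) ^ (2:ℝ)) ^ (1/2:ℝ) := by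
          congr 1
          rw [ENNReal.ofReal_pow (by norm_num), ← ENNReal.rpow_two, ← ENNReal.rpow_mul]
          norm_num
      _ = (ENNReal.ofReal ((1/50:ℝ)^2) * ∫⁻ p, (‖ffun h p‖₊ : ℝ≥0∞) ^ (2:ℝ)) ^ (1/2:ℝ) :=
          (ENNReal.mul_rpow_of_nonneg _ _ (by norm_num)).symm
      _ ≤ (∫⁻ p, (‖(Xset h).indicator (ffun h) p‖₊ : ℝ≥0∞) ^ (2:ℝ)) ^ (1/2:ℝ) :=
          ENNReal.rpow_le_rpow hsq (by norm_num)

lemma choose_h (c C β : ℝ) (hc : 0 < c) (hC : 0 < C) (hβ : 0 < β) :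
    ∃ h : ℝ, h ∈ Set.Ioo (0:ℝ) 1 ∧ C * h ^ β < c := by
  refine ⟨min (1/2) ((c / (2 * C)) ^ (1/β)), ⟨?_, ?_⟩, ?_⟩
  · exact lt_min (by norm_num) (Real.rpow_pos_of_pos (by positivity) _)
  · exact (min_le_left _ _).trans_lt (by norm_num)
  · have h0 : (0:ℝ) < (c / (2 * C)) ^ (1/β) := Real.rpow_pos_of_pos (by positivity) _
    have hle : min (1/2) ((c / (2 * C)) ^ (1/β)) ≤ (c / (2 * C)) ^ (1/β) := min_le_right _ _
    have hmin0 : (0:ℝ) ≤ min (1/2) ((c / (2 * C)) ^ (1/β)) :=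
      le_min (by norm_num) h0.le
    have hpow : (min (1/2) ((c / (2 * C)) ^ (1/β))) ^ β ≤ ((c / (2 * C)) ^ (1/β)) ^ β :=
      Real.rpow_le_rpow hmin0 hle hβ.le
    have heq : ((c / (2 * C)) ^ (1/β)) ^ β = c / (2 * C) := by
      rw [← Real.rpow_mul (by positivity), one_div_mul_cancel hβ.ne', Real.rpow_one]
    rw [heq] at hpow
    calc C * (min (1/2) ((c / (2 * C)) ^ (1/β))) ^ β
        ≤ C * (c / (2 * C)) := mul_le_mul_of_nonneg_left hpow hC.le
      _ = c / 2 := by field_simp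
      _ < c := by linarith

end NoNaiveFUP

end

/-- **Failure of the naïve 2D fractal uncertainty principle.** There is `c > 0` such that for
every `h ∈ (0,1)` there is a nonzero `f ∈ L²(ℝ²)` with `supp f̂ ⊆ h⁻¹Y = [0,h⁻¹] × [0,1/10]`
and `‖1_X f‖ ≥ c ‖f‖`, where `X = [0,h/10] × [0,1]`. In particular there are no `C, β > 0`
such that every `f ∈ L²(ℝ²)` with `supp f̂ ⊆ h⁻¹Y` satisfies `‖1_X f‖ ≤ C h^β ‖f‖` for
all `h ∈ (0,1)`. -/
theorem no_naive_fup_in_2d :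
    (∃ c : ℝ, 0 < c ∧ ∀ h : ℝ, h ∈ Set.Ioo (0:ℝ) 1 →
      ∃ f g : EuclideanSpace ℝ (Fin 2) → ℂ,
        MemLp f 2 volume ∧ ¬ (f =ᵐ[volume] 0) ∧
        MemLp g 2 volume ∧ IsL2FourierTransform2 f g ∧
        Function.support g ⊆ {p | p 0 ∈ Icc 0 h⁻¹ ∧ p 1 ∈ Icc 0 (1/10)} ∧
        ENNReal.ofReal c * eLpNorm f 2 volume ≤
          eLpNorm (({p : EuclideanSpace ℝ (Fin 2) | p 0 ∈ Icc 0 (h/10) ∧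
            p 1 ∈ Icc (0:ℝ) 1}).indicator f) 2 volume)
    ∧
    ¬ (∃ C : ℝ, 0 < C ∧ ∃ β : ℝ, 0 < β ∧
        ∀ h : ℝ, h ∈ Set.Ioo (0:ℝ) 1 →
        ∀ f g : EuclideanSpace ℝ (Fin 2) → ℂ,
          MemLp f 2 volume → MemLp g 2 volume →
          IsL2FourierTransform2 f g →
          Function.support g ⊆ {p | p 0 ∈ Icc 0 h⁻¹ ∧ p 1 ∈ Icc 0 (1/10)} →
          eLpNorm (({p : EuclideanSpace ℝ (Fin 2) | p 0 ∈ Icc 0 (h/10) ∧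
              p 1 ∈ Icc (0:ℝ) 1}).indicator f) 2 volume
            ≤ ENNReal.ofReal (C * h ^ β) * eLpNorm f 2 volume) := by
  constructor
  · exact ⟨1/50, by norm_num, fun h hh => NoNaiveFUP.master h hh⟩
  · rintro ⟨C, hC, β, hβ, Hbad⟩
    obtain ⟨h, hmem, hb⟩ := NoNaiveFUP.choose_h (1/50) C β (by norm_num) hC hβ
    obtain ⟨f, g, hf, hf0, hg, hFT, hsupp, hineq⟩ := NoNaiveFUP.master h hmem
    have h2 := Hbad h hmem f g hf hg hFT hsupp
    have hN0 : eLpNorm f 2 volume ≠ 0 := by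
      intro hzero
      exact hf0 ((eLpNorm_eq_zero_iff hf.1 two_ne_zero).1 hzero)
    have hNtop : eLpNorm f 2 volume ≠ ∞ := hf.2.ne
    have hlt : ENNReal.ofReal (C * h ^ β) * eLpNorm f 2 volume
        < ENNReal.ofReal (1/50) * eLpNorm f 2 volume := by
      refine ENNReal.mul_lt_mul_left hN0 hNtop ?_
      exact (ENNReal.ofReal_lt_ofReal_iff (by norm_num)).2 hb
    exact lt_irrefl _ (lt_of_le_of_lt (hineq.trans h2) hlt)
end

section
/- Let ν ∈ (0,1) and let X ⊆ ℝ be ν-porous up to scale 0, meaning that for every interval I ⊆ ℝ with 0 < |I| ≤ 1 there exists a subinterval J ⊆ I with |J| = ν|I| and J ∩ X = ∅. Then for every h ∈ (0,1), the closed (νh/10)-neighborhood {x ∈ ℝ : dist(x, X) ≤ νh/10} of X is (ν/2)-porous up to scale h. -/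
open Set Metric

/-- A set `X ⊆ ℝ` is `ν`-porous up to scale `h`: every interval `I = [a,b]` with
`h ≤ |I| ≤ 1` contains a subinterval `J = [c,d]` with `|J| = ν|I|` and `J ∩ X = ∅`. -/
def IsPorousUpTo (ν h : ℝ) (X : Set ℝ) : Prop :=
  ∀ a b : ℝ, h ≤ b - a → b - a ≤ 1 →
    ∃ c d : ℝ, a ≤ c ∧ d ≤ b ∧ d - c = ν * (b - a) ∧ Set.Icc c d ∩ X = ∅

/-- A set `X ⊆ ℝ` is `ν`-porous up to scale `0`: every interval `I = [a,b]` with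
`0 < |I| ≤ 1` contains a subinterval `J = [c,d]` with `|J| = ν|I|` and `J ∩ X = ∅`. -/
def IsPorousUpToZero (ν : ℝ) (X : Set ℝ) : Prop :=
  ∀ a b : ℝ, 0 < b - a → b - a ≤ 1 →
    ∃ c d : ℝ, a ≤ c ∧ d ≤ b ∧ d - c = ν * (b - a) ∧ Set.Icc c d ∩ X = ∅

/-- If `X ⊆ ℝ` is `ν`-porous up to scale `0`, then for every `h ∈ (0,1)` the closed
`(νh/10)`-neighborhood `{x : dist(x,X) ≤ νh/10}` of `X` is `ν/2`-porous up to scale `h`. -/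
theorem cthickening_porous (ν : ℝ) (hν : ν ∈ Set.Ioo (0:ℝ) 1) (X : Set ℝ)
    (hX : IsPorousUpToZero ν X) :
    ∀ h : ℝ, h ∈ Set.Ioo (0:ℝ) 1 →
      IsPorousUpTo (ν / 2) h (Metric.cthickening (ν * h / 10) X) := by
  obtain ⟨hν0, hν1⟩ := hν
  rintro h ⟨hh0, hh1⟩ a b hab1 hab2
  obtain ⟨c, d, hac, hdb, hcd, hdisj⟩ := hX a b (lt_of_lt_of_le hh0 hab1) hab2
  have hba0 : 0 < b - a := lt_of_lt_of_le hh0 hab1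
  refine ⟨c + ν / 4 * (b - a), c + ν / 4 * (b - a) + ν / 2 * (b - a), ?_, ?_, by ring, ?_⟩
  · nlinarith
  · nlinarith
  · ext x
    simp only [Set.mem_inter_iff, Set.mem_Icc, Set.mem_empty_iff_false, iff_false, not_and,
      and_imp]
    intro hx1 hx2 hx3
    have hlt : EMetric.infEdist x X < ENNReal.ofReal (ν * h / 4) := by
      calc EMetric.infEdist x X ≤ ENNReal.ofReal (ν * h / 10) :=
            (Metric.mem_cthickening_iff.mp hx3)
        _ < ENNReal.ofReal (ν * h / 4) := by
            apply ENNReal.ofReal_lt_ofReal_iff_of_nonneg (by positivity) |>.mpr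
            nlinarith
    obtain ⟨y, hy, hdy⟩ := EMetric.infEdist_lt_iff.mp hlt
    have hdxy : dist x y < ν * h / 4 := by
      rw [edist_dist] at hdy
      exact (ENNReal.ofReal_lt_ofReal_iff_of_nonneg dist_nonneg).mp hdy
    have habs : |x - y| < ν * h / 4 := by rwa [Real.dist_eq] at hdxy
    have h4 : ν * h / 4 ≤ ν / 4 * (b - a) := by nlinarith
    have hyc : c ≤ y := by
      have := abs_lt.mp habs
      linarith
    have hyd : y ≤ d := by
      have := abs_lt.mp habs
      nlinarith [hcd]
    have : y ∈ Set.Icc c d ∩ X := ⟨⟨hyc, hyd⟩, hy⟩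
    rw [hdisj] at this
    exact this
end
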